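/- Let R be a ring. If a ∈ √Δ(R) is central (a ∈ C(R)), then a ∈ Δ(R). -/
import Mathlib


/-- Δ(R) = {x : 1 - x*u is a unit for every unit u}. -/
def Delta (R : Type*) [Ring R] : Set R :=
  {x | ∀ u : R, IsUnit u → IsUnit (1 - x * u)}

/-- √Δ(R) = {x : x^n ∈ Δ(R) for some n ≥ 1}. -/
def sqrtDelta (R : Type*) [Ring R] : Set R :=
  {x | ∃ n : ℕ, 1 ≤ n ∧ x ^ n ∈ Delta R}

theorem stmt_2 {R : Type*} [Ring R] (a : R) (ha : a ∈ sqrtDelta R)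
    (hc : ∀ r : R, a * r = r * a) : a ∈ Delta R := by
  obtain ⟨n, hn, hΔ⟩ := ha
  intro u hu
  set x := a * u with hx
  have hcomm : Commute a u := hc u
  have hxn : x ^ n = a ^ n * u ^ n := hcomm.mul_pow n
  have hun : IsUnit (1 - x ^ n) := by
    rw [hxn]; exact hΔ (u ^ n) (hu.pow n)
  have hgeom : (1 - x) * ∑ i ∈ Finset.range n, x ^ i = 1 - x ^ n := by
    have := mul_geom_sum x n
    have h2 : (-(x - 1)) * ∑ i ∈ Finset.range n, x ^ i = -(x ^ n - 1) := by
      rw [neg_mul, this]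
    simpa [neg_sub] using h2
  have hcomm2 : Commute (1 - x) (∑ i ∈ Finset.range n, x ^ i) := by
    apply Commute.sub_left
    · exact Commute.one_left _
    · exact Commute.sum_right _ _ _ fun i _ => (Commute.refl x).pow_right i
  have := hcomm2.isUnit_mul_iff.mp (hgeom ▸ hun)
  exact this.1
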